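/- arXiv:1912.11279 — 3 statements merged into one kernel-verified Lean document; each statement's English description precedes it below -/
import Mathlib

section
/- In the OFOM attack on MWU-with-averaging (MwuAvg), the first weight update assigns weight exactly 1 to the second malicious update and vanishing weight to all other parties: let θ₁, …, θ_n ∈ ℝ^d be benign updates with mean μ = (1/n)·Σᵢ θᵢ, fix a unit vector v ∈ ℝ^d, and for t > 0 set θ' = t·v, θᵐ₁ = μ + θ', θᵐ₂ = (n·μ + θᵐ₁)/(n+1), and let θₐ⁰ be the unweighted average of θ₁, …, θ_n, θᵐ₁, θᵐ₂. Then the updated weight exp(−‖θₐ⁰ − θᵐ₂‖₂) of the party submitting θᵐ₂ equals 1 for every t, while as t → ∞ the updated weight exp(−‖θₐ⁰ − θᵢ‖₂) of each benign party i tends to 0 and the updated weight exp(−‖θₐ⁰ − θᵐ₁‖₂) of the party submitting θᵐ₁ tends to 0. -/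
open Filter

/-- In the OFOM attack on MwuAvg, the first multiplicative weight update gives weight
exactly 1 to the second malicious update `θᵐ₂`, while the weights of every benign party
and of the first malicious update tend to 0 as the attack magnitude `t → ∞`. -/
theorem ofom_mwuavg_weights
    (d n : ℕ) (hn : 1 ≤ n)
    (θ : Fin n → EuclideanSpace ℝ (Fin d))
    (μ : EuclideanSpace ℝ (Fin d)) (hμ : μ = ((n : ℝ))⁻¹ • ∑ i, θ i)
    (v : EuclideanSpace ℝ (Fin d)) (hv : ‖v‖ = 1)
    (θm₁ θm₂ θa₀ : ℝ → EuclideanSpace ℝ (Fin d))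
    (h₁ : ∀ t : ℝ, θm₁ t = μ + t • v)
    (h₂ : ∀ t : ℝ, θm₂ t = ((n + 1 : ℝ))⁻¹ • ((n : ℝ) • μ + θm₁ t))
    (h₀ : ∀ t : ℝ, θa₀ t = ((n + 2 : ℝ))⁻¹ • ((∑ i, θ i) + θm₁ t + θm₂ t)) :
    (∀ t : ℝ, 0 < t → Real.exp (-‖θa₀ t - θm₂ t‖) = 1) ∧
    (∀ i : Fin n,
      Tendsto (fun t : ℝ => Real.exp (-‖θa₀ t - θ i‖)) atTop (nhds 0)) ∧
    Tendsto (fun t : ℝ => Real.exp (-‖θa₀ t - θm₁ t‖)) atTop (nhds 0) := by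
  have hn0 : (n : ℝ) ≠ 0 := by positivity
  have ha : ((n : ℝ) + 1) ≠ 0 := by positivity
  have hb : ((n : ℝ) + 2) ≠ 0 := by positivity
  have hsum : (∑ i, θ i) = (n : ℝ) • μ := by
    rw [hμ, smul_smul, mul_inv_cancel₀ hn0, one_smul]
  -- closed forms
  have hm2 : ∀ t : ℝ, θm₂ t = μ + (t / ((n : ℝ) + 1)) • v := by
    intro t
    rw [h₂, h₁]
    match_scalars <;> field_simp
  have ha0 : ∀ t : ℝ, θa₀ t = μ + (t / ((n : ℝ) + 1)) • v := by
    intro t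
    rw [h₀, hsum, hm2, h₁]
    match_scalars <;> field_simp <;> ring
  have hapos : (0 : ℝ) < (n : ℝ) + 1 := by positivity
  refine ⟨fun t _ => ?_, fun i => ?_, ?_⟩
  · rw [ha0, hm2, sub_self, norm_zero, neg_zero, Real.exp_zero]
  · -- benign parties
    have key : Tendsto (fun t : ℝ => ‖θa₀ t - θ i‖) atTop atTop := by
      have hlow : Tendsto (fun t : ℝ => t / ((n : ℝ) + 1) - ‖μ - θ i‖) atTop atTop := by
        exact (tendsto_id.atTop_div_const hapos).atTop_add tendsto_const_nhds
      refine tendsto_atTop_mono' _ ?_ hlow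
      filter_upwards [eventually_ge_atTop (0 : ℝ)] with t ht
      have h1 : θa₀ t - θ i = (μ - θ i) + (t / ((n : ℝ) + 1)) • v := by
        rw [ha0]; abel
      have h2 : ‖(t / ((n : ℝ) + 1)) • v‖ = t / ((n : ℝ) + 1) := by
        rw [norm_smul, hv, mul_one, Real.norm_eq_abs, abs_of_nonneg (by positivity)]
      have h3 : ‖(t / ((n : ℝ) + 1)) • v‖
          = ‖(θa₀ t - θ i) - (μ - θ i)‖ := by rw [h1]; congr 1; abel
      have h4 := norm_sub_le (θa₀ t - θ i) (μ - θ i)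
      rw [← h3, h2] at h4
      linarith
    exact Real.tendsto_exp_atBot.comp (tendsto_neg_atTop_atBot.comp key)
  · -- first malicious party
    have key : Tendsto (fun t : ℝ => ‖θa₀ t - θm₁ t‖) atTop atTop := by
      have hc : (0 : ℝ) < 1 - 1 / ((n : ℝ) + 1) := by
        rw [sub_pos, div_lt_one hapos]
        have : (1 : ℝ) ≤ (n : ℝ) := by exact_mod_cast hn
        linarith
      have hlow : Tendsto (fun t : ℝ => t * (1 - 1 / ((n : ℝ) + 1))) atTop atTop :=
        Tendsto.atTop_mul_const hc tendsto_id
      refine tendsto_atTop_mono' _ ?_ hlow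
      filter_upwards [eventually_ge_atTop (0 : ℝ)] with t ht
      have h1 : θa₀ t - θm₁ t = (t / ((n : ℝ) + 1) - t) • v := by
        rw [ha0, h₁]
        match_scalars <;> ring
      rw [h1, norm_smul, hv, mul_one, Real.norm_eq_abs]
      have : t * (1 - 1 / ((n : ℝ) + 1)) = -(t / ((n : ℝ) + 1) - t) := by ring
      rw [this]
      exact neg_le_abs _
    exact Real.tendsto_exp_atBot.comp (tendsto_neg_atTop_atBot.comp key)
end

section
/- The OFOM attack drives the MwuAvg aggregate arbitrarily far from the benign mean: let θ₁, …, θ_n ∈ ℝ^d be benign updates with mean μ = (1/n)·Σᵢ θᵢ, fix a unit vector v ∈ ℝ^d, and for t > 0 set θ' = t·v, θᵐ₁ = μ + θ', θᵐ₂ = (n·μ + θᵐ₁)/(n+1). Let θₐ⁰ be the unweighted average of θ₁, …, θ_n, θᵐ₁, θᵐ₂, assign each update θ the weight w(θ) = exp(−‖θₐ⁰ − θ‖₂), and let θₐ¹ = (Σ w(θ)·θ)/(Σ w(θ)) be the resulting weighted-average aggregate over all n + 2 updates. Then as t → ∞, ‖θₐ¹ − θᵐ₂‖₂ → 0 and ‖θₐ¹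 − μ‖₂ → ∞. -/
open Filter

/-- The OFOM attack drives the MwuAvg aggregate arbitrarily far from the benign mean:
with weights `w(θ) = exp(−‖θa₀ − θ‖₂)` computed from the initial unweighted aggregate
`θa₀`, the resulting weighted-average aggregate `θa₁` converges to the second malicious
update `θᵐ₂` while its distance to the benign mean `μ` tends to infinity as `t → ∞`. -/
theorem ofom_drives_mwuavg_aggregate_away
    (d n : ℕ) (hn : 1 ≤ n)
    (θ : Fin n → EuclideanSpace ℝ (Fin d))
    (μ : EuclideanSpace ℝ (Fin d)) (hμ : μ = ((n : ℝ))⁻¹ • ∑ i, θ i)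
    (v : EuclideanSpace ℝ (Fin d)) (hv : ‖v‖ = 1)
    (θm₁ θm₂ θa₀ θa₁ : ℝ → EuclideanSpace ℝ (Fin d)) (W : ℝ → ℝ)
    (h₁ : ∀ t : ℝ, θm₁ t = μ + t • v)
    (h₂ : ∀ t : ℝ, θm₂ t = ((n + 1 : ℝ))⁻¹ • ((n : ℝ) • μ + θm₁ t))
    (h₀ : ∀ t : ℝ, θa₀ t = ((n + 2 : ℝ))⁻¹ • ((∑ i, θ i) + θm₁ t + θm₂ t))
    (hW : ∀ t : ℝ, W t =
      (∑ i, Real.exp (-‖θa₀ t - θ i‖)) +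
        Real.exp (-‖θa₀ t - θm₁ t‖) + Real.exp (-‖θa₀ t - θm₂ t‖))
    (hA : ∀ t : ℝ, θa₁ t = (W t)⁻¹ •
      ((∑ i, Real.exp (-‖θa₀ t - θ i‖) • θ i) +
        Real.exp (-‖θa₀ t - θm₁ t‖) • θm₁ t +
        Real.exp (-‖θa₀ t - θm₂ t‖) • θm₂ t)) :
    Tendsto (fun t : ℝ => ‖θa₁ t - θm₂ t‖) atTop (nhds 0) ∧
    Tendsto (fun t : ℝ => ‖θa₁ t - μ‖) atTop atTop := by
  have hn0 : (0:ℝ) < (n:ℝ) := by exact_mod_cast hn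
  have hn1 : (0:ℝ) < (n:ℝ) + 1 := by positivity
  set c : ℝ := ((n:ℝ) + 1)⁻¹ with hc
  have hc0 : 0 < c := by positivity
  have hc1 : c < 1 := by rw [hc, inv_lt_one_iff₀]; right; linarith
  have hsum : (∑ i, θ i) = (n:ℝ) • μ := by
    rw [hμ, smul_smul, mul_inv_cancel₀ (ne_of_gt hn0), one_smul]
  have hm2 : ∀ t, θm₂ t = μ + (c * t) • v := by
    intro t; rw [h₂ t, h₁ t, hc]
    match_scalars <;> field_simp
  have ha0 : ∀ t, θa₀ t = μ + (c * t) • v := by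
    intro t; rw [h₀ t, h₁ t, hm2 t, hsum, hc]
    match_scalars <;> field_simp <;> ring
  -- the weight of θm₂ is exactly 1
  have hb : ∀ t, Real.exp (-‖θa₀ t - θm₂ t‖) = 1 := by
    intro t; rw [ha0 t, hm2 t]; simp
  -- distance from θa₀ to θm₁
  have hd1 : ∀ t : ℝ, 0 ≤ t → ‖θa₀ t - θm₁ t‖ = (1 - c) * t := by
    intro t ht
    have h : θa₀ t - θm₁ t = (c * t - t) • v := by rw [ha0 t, h₁ t]; module
    rw [h, norm_smul, hv, mul_one, Real.norm_eq_abs, abs_of_nonpos (by nlinarith)]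
    ring
  -- distance from θm₂ to μ
  have hd2 : ∀ t : ℝ, 0 ≤ t → ‖θm₂ t - μ‖ = c * t := by
    intro t ht
    have h : θm₂ t - μ = (c * t) • v := by rw [hm2 t]; module
    rw [h, norm_smul, hv, mul_one, Real.norm_eq_abs, abs_of_nonneg (by positivity)]
  -- distance from θm₁ to θm₂
  have hd3 : ∀ t : ℝ, 0 ≤ t → ‖θm₁ t - θm₂ t‖ = (1 - c) * t := by
    intro t ht
    have h : θm₁ t - θm₂ t = (t - c * t) • v := by rw [h₁ t, hm2 t]; module
    rw [h, norm_smul, hv, mul_one, Real.norm_eq_abs, abs_of_nonneg (by nlinarith)]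
    ring
  -- total weight is at least 1
  have hW1 : ∀ t, 1 ≤ W t := by
    intro t
    have hs : 0 ≤ ∑ i, Real.exp (-‖θa₀ t - θ i‖) :=
      Finset.sum_nonneg fun i _ => (Real.exp_pos _).le
    have he : 0 < Real.exp (-‖θa₀ t - θm₁ t‖) := Real.exp_pos _
    rw [hW t, hb t]; linarith
  have hW0 : ∀ t, W t ≠ 0 := fun t => by have := hW1 t; linarith
  -- exact formula for the deviation
  have hdiff : ∀ t, θa₁ t - θm₂ t =
      (W t)⁻¹ • ((∑ i, Real.exp (-‖θa₀ t - θ i‖) • (θ i - θm₂ t)) +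
        Real.exp (-‖θa₀ t - θm₁ t‖) • (θm₁ t - θm₂ t)) := by
    intro t
    rw [hA t, hb t]
    have key : (∑ i, Real.exp (-‖θa₀ t - θ i‖) • (θ i - θm₂ t)) +
        Real.exp (-‖θa₀ t - θm₁ t‖) • (θm₁ t - θm₂ t)
        = ((∑ i, Real.exp (-‖θa₀ t - θ i‖) • θ i) +
            Real.exp (-‖θa₀ t - θm₁ t‖) • θm₁ t + (1:ℝ) • θm₂ t) - (W t) • θm₂ t := by
      rw [hW t, hb t]
      simp only [smul_sub, Finset.sum_sub_distrib, add_smul, Finset.sum_smul, one_smul]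
      abel
    rw [key, smul_sub, smul_smul, inv_mul_cancel₀ (hW0 t), one_smul]
  -- dominating function
  set g : ℝ → ℝ := fun t =>
    (∑ i, Real.exp ‖θ i - μ‖ * (Real.exp (-(c*t)) * (‖θ i - μ‖ + c*t))) +
      Real.exp (-((1-c)*t)) * (0 + (1-c)*t) with hg
  -- pointwise bound for t ≥ 0
  have hbound : ∀ t : ℝ, 0 ≤ t → ‖θa₁ t - θm₂ t‖ ≤ g t := by
    intro t ht
    have hct : ‖(c*t) • v‖ = c * t := by
      rw [norm_smul, hv, mul_one, Real.norm_eq_abs, abs_of_nonneg (by positivity)]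
    have hterm : ∀ i : Fin n, ‖Real.exp (-‖θa₀ t - θ i‖) • (θ i - θm₂ t)‖ ≤
        Real.exp ‖θ i - μ‖ * (Real.exp (-(c*t)) * (‖θ i - μ‖ + c*t)) := by
      intro i
      have h1 : c * t - ‖θ i - μ‖ ≤ ‖θa₀ t - θ i‖ := by
        have h : θa₀ t - θ i = (c * t) • v - (θ i - μ) := by rw [ha0 t]; module
        rw [h]
        calc c * t - ‖θ i - μ‖ = ‖(c*t) • v‖ - ‖θ i - μ‖ := by rw [hct]
        _ ≤ _ := norm_sub_norm_le _ _
      have h2 : ‖θ i - θm₂ t‖ ≤ ‖θ i - μ‖ + c * t := by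
        have h : θ i - θm₂ t = (θ i - μ) - (c * t) • v := by rw [hm2 t]; module
        rw [h]
        calc ‖(θ i - μ) - (c*t) • v‖ ≤ ‖θ i - μ‖ + ‖(c*t) • v‖ := norm_sub_le _ _
        _ = _ := by rw [hct]
      have h3 : Real.exp (-‖θa₀ t - θ i‖) ≤ Real.exp ‖θ i - μ‖ * Real.exp (-(c*t)) := by
        rw [← Real.exp_add]
        exact Real.exp_le_exp.2 (by linarith)
      rw [norm_smul, Real.norm_eq_abs, abs_of_nonneg (Real.exp_pos _).le]
      calc Real.exp (-‖θa₀ t - θ i‖) * ‖θ i - θm₂ t‖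
          ≤ (Real.exp ‖θ i - μ‖ * Real.exp (-(c*t))) * (‖θ i - μ‖ + c*t) :=
            mul_le_mul h3 h2 (norm_nonneg _) (by nlinarith [norm_nonneg (θ i - μ), Real.exp_pos ‖θ i - μ‖, Real.exp_pos (-(c*t))])
        _ = _ := by ring
    have hterm2 : ‖Real.exp (-‖θa₀ t - θm₁ t‖) • (θm₁ t - θm₂ t)‖ =
        Real.exp (-((1-c)*t)) * (0 + (1-c)*t) := by
      rw [norm_smul, Real.norm_eq_abs, abs_of_nonneg (Real.exp_pos _).le,
        hd1 t ht, hd3 t ht, zero_add]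
    have hnn : (0:ℝ) ≤ (W t)⁻¹ := inv_nonneg.2 (by linarith [hW1 t])
    rw [hdiff t, norm_smul, Real.norm_eq_abs, abs_of_nonneg hnn]
    have hWle : (W t)⁻¹ ≤ 1 := inv_le_one_of_one_le₀ (hW1 t)
    calc (W t)⁻¹ * ‖(∑ i, Real.exp (-‖θa₀ t - θ i‖) • (θ i - θm₂ t)) +
          Real.exp (-‖θa₀ t - θm₁ t‖) • (θm₁ t - θm₂ t)‖
        ≤ 1 * ‖(∑ i, Real.exp (-‖θa₀ t - θ i‖) • (θ i - θm₂ t)) +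
          Real.exp (-‖θa₀ t - θm₁ t‖) • (θm₁ t - θm₂ t)‖ :=
          mul_le_mul_of_nonneg_right hWle (norm_nonneg _)
      _ = ‖(∑ i, Real.exp (-‖θa₀ t - θ i‖) • (θ i - θm₂ t)) +
          Real.exp (-‖θa₀ t - θm₁ t‖) • (θm₁ t - θm₂ t)‖ := one_mul _
      _ ≤ ‖∑ i, Real.exp (-‖θa₀ t - θ i‖) • (θ i - θm₂ t)‖ +
          ‖Real.exp (-‖θa₀ t - θm₁ t‖) • (θm₁ t - θm₂ t)‖ := norm_add_le _ _
      _ ≤ (∑ i, ‖Real.exp (-‖θa₀ t - θ i‖) • (θ i - θm₂ t)‖) +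
          ‖Real.exp (-‖θa₀ t - θm₁ t‖) • (θm₁ t - θm₂ t)‖ := by
            gcongr; exact norm_sum_le _ _
      _ ≤ g t := by
            rw [hg, hterm2]
            exact add_le_add (Finset.sum_le_sum fun i _ => hterm i) le_rfl
  -- g tends to 0
  have hzero : ∀ b A : ℝ, 0 < b →
      Tendsto (fun t : ℝ => Real.exp (-(b*t)) * (A + b*t)) atTop (nhds 0) := by
    intro b A hbpos
    have hbt : Tendsto (fun t : ℝ => b * t) atTop atTop :=
      Tendsto.const_mul_atTop hbpos tendsto_id
    have h1 : Tendsto (fun t : ℝ => Real.exp (-(b*t))) atTop (nhds 0) :=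
      Real.tendsto_exp_neg_atTop_nhds_zero.comp hbt
    have h2 : Tendsto (fun t : ℝ => (b*t) * Real.exp (-(b*t))) atTop (nhds 0) := by
      have := (Real.tendsto_pow_mul_exp_neg_atTop_nhds_zero 1).comp hbt
      simpa [Function.comp_def] using this
    have h3 : Tendsto (fun t : ℝ => A * Real.exp (-(b*t)) + (b*t) * Real.exp (-(b*t)))
        atTop (nhds 0) := by simpa using (h1.const_mul A).add h2
    convert h3 using 2 with t
    ring
  have hgz : Tendsto g atTop (nhds 0) := by
    rw [hg]
    have hs : Tendsto (fun t : ℝ => ∑ i : Fin n,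
        Real.exp ‖θ i - μ‖ * (Real.exp (-(c*t)) * (‖θ i - μ‖ + c*t))) atTop (nhds 0) := by
      have := tendsto_finset_sum (Finset.univ : Finset (Fin n))
        (fun i _ => ((hzero c ‖θ i - μ‖ hc0).const_mul (Real.exp ‖θ i - μ‖)))
      simpa using this
    have ha2 : Tendsto (fun t : ℝ => Real.exp (-((1-c)*t)) * (0 + (1-c)*t))
        atTop (nhds 0) := hzero (1-c) 0 (by linarith)
    simpa using hs.add ha2
  -- first conclusion
  have part1 : Tendsto (fun t : ℝ => ‖θa₁ t - θm₂ t‖) atTop (nhds 0) := by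
    apply squeeze_zero' (Eventually.of_forall fun t => norm_nonneg _) _ hgz
    filter_upwards [eventually_ge_atTop (0:ℝ)] with t ht using hbound t ht
  refine ⟨part1, ?_⟩
  -- second conclusion
  have hlow : ∀ᶠ t in atTop, -‖θa₁ t - θm₂ t‖ + c * t ≤ ‖θa₁ t - μ‖ := by
    filter_upwards [eventually_ge_atTop (0:ℝ)] with t ht
    have h1 : ‖θm₂ t - μ‖ - ‖θm₂ t - θa₁ t‖ ≤ ‖(θm₂ t - μ) - (θm₂ t - θa₁ t)‖ :=
      norm_sub_norm_le _ _
    have h2 : (θm₂ t - μ) - (θm₂ t - θa₁ t) = θa₁ t - μ := by abel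
    rw [h2, hd2 t ht, norm_sub_rev] at h1
    linarith
  have htend : Tendsto (fun t : ℝ => -‖θa₁ t - θm₂ t‖ + c * t) atTop atTop := by
    have h1 : Tendsto (fun t : ℝ => -‖θa₁ t - θm₂ t‖) atTop (nhds (-0)) := part1.neg
    exact h1.add_atTop (Tendsto.const_mul_atTop hc0 tendsto_id)
  exact tendsto_atTop_mono' atTop hlow htend
end

section
/- Bounded empirical variance in every direction implies the sample mean is close to the mean of every large subset (the correctness principle behind the spectral filtering stopping condition λ* ≤ 9 in the Cronus robust aggregation): let S be a finite nonempty multiset of vectors in ℝ^d with mean μ_S = (1/|S|)·Σ_{x∈S} x and empirical covariance Σ_S = (1/|S|)·Σ_{x∈S} (x − μ_S)(x − μ_S)ᵀ. Suppose the largest eigenvalue of Σ_S is at most λ. Then for every 0 ≤ ε < 1 and every sub-multiset T ⊆ S with |T| ≥ (1−ε)·|S|, the mean μ_T = (1/|T|)·Σ_{x∈T} x satisfies ‖μ_T − μ_S‖₂ ≤ √(λ·ε)/(1−ε). -/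
lemma msq_sum_le (m : Multiset ℝ) :
    (m.sum) ^ 2 ≤ (Multiset.card m : ℝ) * (m.map (fun a => a ^ 2)).sum := by
  induction m using Multiset.induction_on with
  | empty => simp
  | cons a s ih =>
    have hQ : (0:ℝ) ≤ (s.map (fun a => a ^ 2)).sum :=
      Multiset.sum_nonneg (by intro x hx; rcases Multiset.mem_map.1 hx with ⟨y, _, rfl⟩; positivity)
    have hn : (0:ℝ) ≤ (Multiset.card s : ℝ) := Nat.cast_nonneg _
    simp only [Multiset.sum_cons, Multiset.card_cons, Multiset.map_cons, Nat.cast_add,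
      Nat.cast_one]
    by_cases hs : s = 0
    · subst hs; simp
    · have hn1 : (1:ℝ) ≤ (Multiset.card s : ℝ) := by
        exact_mod_cast Nat.one_le_iff_ne_zero.mpr (by simpa [Multiset.card_eq_zero] using hs)
      nlinarith [sq_nonneg ((Multiset.card s : ℝ) * a - s.sum),
        mul_le_mul_of_nonneg_left ih hn, sq_nonneg s.sum]

set_option maxHeartbeats 2000000 in
/-- Bounded empirical variance in every direction implies the sample mean is close to
the mean of every large sub-multiset: if the largest eigenvalue of the empirical
covariance of `S` is at most `lam` (equivalently, the empirical variance along every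
unit direction is at most `lam`), then for every sub-multiset `T ⊆ S` with
`|T| ≥ (1−ε)·|S|`, the means satisfy `‖μ_T − μ_S‖₂ ≤ √(lam·ε)/(1−ε)`. -/
theorem bounded_variance_subset_mean_close
    (d : ℕ) (S : Multiset (EuclideanSpace ℝ (Fin d))) (hS : S ≠ 0)
    (μS : EuclideanSpace ℝ (Fin d))
    (hμS : μS = ((Multiset.card S : ℝ))⁻¹ • S.sum)
    (lam : ℝ)
    (hcov : ∀ v : EuclideanSpace ℝ (Fin d), ‖v‖ = 1 →
      ((Multiset.card S : ℝ))⁻¹ *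
        (S.map (fun x => (inner ℝ (x - μS) v : ℝ) ^ 2)).sum ≤ lam)
    (ε : ℝ) (hε0 : 0 ≤ ε) (hε1 : ε < 1)
    (T : Multiset (EuclideanSpace ℝ (Fin d))) (hTS : T ≤ S)
    (hTcard : (1 - ε) * (Multiset.card S : ℝ) ≤ (Multiset.card T : ℝ))
    (μT : EuclideanSpace ℝ (Fin d))
    (hμT : μT = ((Multiset.card T : ℝ))⁻¹ • T.sum) :
    ‖μT - μS‖ ≤ Real.sqrt (lam * ε) / (1 - ε) := by
  have hε1' : (0:ℝ) < 1 - ε := by linarith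
  by_cases hD : μT - μS = 0
  · rw [hD, norm_zero]; positivity
  have hn0 : 0 < Multiset.card S := Multiset.card_pos.mpr hS
  have hn : (0:ℝ) < (Multiset.card S : ℝ) := by exact_mod_cast hn0
  have hm : (0:ℝ) < (Multiset.card T : ℝ) := lt_of_lt_of_le (by nlinarith) hTcard
  set D : EuclideanSpace ℝ (Fin d) := μT - μS with hDdef
  set v : EuclideanSpace ℝ (Fin d) := ‖D‖⁻¹ • D with hv
  have hDn : (0:ℝ) < ‖D‖ := norm_pos_iff.mpr hD
  have hvnorm : ‖v‖ = 1 := by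
    rw [hv, norm_smul, norm_inv, norm_norm, inv_mul_cancel₀ (ne_of_gt hDn)]
  set L : EuclideanSpace ℝ (Fin d) →L[ℝ] ℝ := innerSL ℝ v with hL
  have hLμ : ∀ x, L x = (inner ℝ x v : ℝ) := by
    intro x; rw [hL, innerSL_apply_apply, real_inner_comm]
  have hLx : ∀ x, L x = (inner ℝ (x - μS) v : ℝ) + (inner ℝ μS v : ℝ) := by
    intro x
    rw [hLμ, inner_sub_left]; ring
  have hsumL : ∀ (U : Multiset (EuclideanSpace ℝ (Fin d))), L U.sum =
      (U.map (fun x => (inner ℝ (x - μS) v : ℝ))).sum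
        + (Multiset.card U : ℝ) * (inner ℝ μS v : ℝ) := by
    intro U
    rw [map_multiset_sum]
    induction U using Multiset.induction_on with
    | empty => simp
    | cons a s ih =>
      simp only [Multiset.map_cons, Multiset.sum_cons, Multiset.card_cons, Nat.cast_add,
        Nat.cast_one, ih, hLx a]
      ring
  have hSsum : ((S.map (fun x => (inner ℝ (x - μS) v : ℝ))).sum) = 0 := by
    have h1 : S.sum = (Multiset.card S : ℝ) • μS := by
      rw [hμS, smul_smul, mul_inv_cancel₀ (ne_of_gt hn), one_smul]
    have h2 := hsumL S
    rw [h1, map_smul, hLμ μS] at h2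
    simp only [smul_eq_mul] at h2
    linarith
  have hDv : (inner ℝ D v : ℝ) = ‖D‖ := by
    rw [hv, real_inner_smul_right, real_inner_self_eq_norm_sq]
    field_simp
  have hTsum : ((T.map (fun x => (inner ℝ (x - μS) v : ℝ))).sum)
      = (Multiset.card T : ℝ) * ‖D‖ := by
    have h1 : T.sum = (Multiset.card T : ℝ) • μT := by
      rw [hμT, smul_smul, mul_inv_cancel₀ (ne_of_gt hm), one_smul]
    have h2 := hsumL T
    rw [h1, map_smul, hLμ μT] at h2
    have h3 : (inner ℝ μT v : ℝ) - (inner ℝ μS v : ℝ) = ‖D‖ := by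
      rw [← inner_sub_left]; exact hDv
    simp only [smul_eq_mul] at h2
    linear_combination (Multiset.card T : ℝ) * h3 - h2
  -- complement
  obtain ⟨T', hadd'⟩ := Multiset.le_iff_exists_add.1 hTS
  have hadd : T' + T = S := by rw [hadd', add_comm]
  have hT'sum : ((T'.map (fun x => (inner ℝ (x - μS) v : ℝ))).sum)
      = -((Multiset.card T : ℝ) * ‖D‖) := by
    have : ((T'.map (fun x => (inner ℝ (x - μS) v : ℝ))).sum)
        + ((T.map (fun x => (inner ℝ (x - μS) v : ℝ))).sum)
        = ((S.map (fun x => (inner ℝ (x - μS) v : ℝ))).sum) := by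
      rw [← Multiset.sum_add, ← Multiset.map_add, hadd]
    rw [hTsum, hSsum] at this
    linarith
  -- Cauchy-Schwarz on T'
  have hCS := msq_sum_le (T'.map (fun x => (inner ℝ (x - μS) v : ℝ)))
  rw [Multiset.card_map, Multiset.map_map] at hCS
  -- bound card T'
  have hcardT' : (Multiset.card T' : ℝ) ≤ ε * (Multiset.card S : ℝ) := by
    have h1 : Multiset.card T' + Multiset.card T = Multiset.card S := by
      rw [← Multiset.card_add, hadd]
    have h2 : (Multiset.card T' : ℝ) + (Multiset.card T : ℝ) = (Multiset.card S : ℝ) := by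
      exact_mod_cast h1
    nlinarith
  -- bound sum of squares over T' by over S
  have hsq_nonneg : ∀ (U : Multiset (EuclideanSpace ℝ (Fin d))),
      (0:ℝ) ≤ (U.map (fun x => (inner ℝ (x - μS) v : ℝ) ^ 2)).sum := by
    intro U
    exact Multiset.sum_nonneg (by intro x hx; rcases Multiset.mem_map.1 hx with ⟨y, _, rfl⟩; positivity)
  have hsqle : ((T'.map (fun x => (inner ℝ (x - μS) v : ℝ) ^ 2)).sum)
      ≤ ((S.map (fun x => (inner ℝ (x - μS) v : ℝ) ^ 2)).sum) := by
    have : ((T'.map (fun x => (inner ℝ (x - μS) v : ℝ) ^ 2)).sum)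
        + ((T.map (fun x => (inner ℝ (x - μS) v : ℝ) ^ 2)).sum)
        = ((S.map (fun x => (inner ℝ (x - μS) v : ℝ) ^ 2)).sum) := by
      rw [← Multiset.sum_add, ← Multiset.map_add, hadd]
    linarith [hsq_nonneg T]
  have hSsq : ((S.map (fun x => (inner ℝ (x - μS) v : ℝ) ^ 2)).sum)
      ≤ lam * (Multiset.card S : ℝ) := by
    have := hcov v hvnorm
    rw [inv_mul_le_iff₀ hn] at this
    linarith
  have hlam : 0 ≤ lam := by
    have h : (0:ℝ) ≤ lam * (Multiset.card S : ℝ) := le_trans (hsq_nonneg S) hSsq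
    exact le_of_mul_le_mul_right (by linarith) hn
  -- combine
  have hkey : ((Multiset.card T : ℝ) * ‖D‖) ^ 2
      ≤ (lam * ε) * (Multiset.card S : ℝ) ^ 2 := by
    have h1 : ((T'.map (fun x => (inner ℝ (x - μS) v : ℝ))).sum) ^ 2
        ≤ (Multiset.card T' : ℝ) * ((T'.map (fun x => (inner ℝ (x - μS) v : ℝ) ^ 2)).sum) := by
      simpa [Function.comp] using hCS
    rw [hT'sum] at h1
    have h2 : (0:ℝ) ≤ (Multiset.card T' : ℝ) := Nat.cast_nonneg _
    calc ((Multiset.card T : ℝ) * ‖D‖) ^ 2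
        = (-((Multiset.card T : ℝ) * ‖D‖)) ^ 2 := by ring
      _ ≤ (Multiset.card T' : ℝ) * ((T'.map (fun x => (inner ℝ (x - μS) v : ℝ) ^ 2)).sum) := h1
      _ ≤ (ε * (Multiset.card S : ℝ)) * (lam * (Multiset.card S : ℝ)) := by
          apply mul_le_mul hcardT' (le_trans hsqle hSsq) (hsq_nonneg T')
          positivity
      _ = (lam * ε) * (Multiset.card S : ℝ) ^ 2 := by ring
  have hle : (Multiset.card T : ℝ) * ‖D‖ ≤ Real.sqrt (lam * ε) * (Multiset.card S : ℝ) := by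
    have h0 : (0:ℝ) ≤ (Multiset.card T : ℝ) * ‖D‖ := by positivity
    have := Real.sqrt_le_sqrt hkey
    rw [Real.sqrt_sq h0] at this
    calc (Multiset.card T : ℝ) * ‖D‖ ≤ Real.sqrt ((lam * ε) * (Multiset.card S : ℝ) ^ 2) := this
      _ = Real.sqrt (lam * ε) * (Multiset.card S : ℝ) := by
          rw [Real.sqrt_mul (by positivity), Real.sqrt_sq hn.le]
  -- finish
  have hfin : ‖D‖ ≤ Real.sqrt (lam * ε) / (1 - ε) := by
    rw [div_eq_mul_inv, ← div_eq_mul_inv]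
    rw [le_div_iff₀ hε1']
    have hsq : 0 ≤ Real.sqrt (lam * ε) := Real.sqrt_nonneg _
    -- ‖D‖ * (1-ε) * card S ≤ √ * card S ... from hle and hTcard
    have h1 : (1 - ε) * (Multiset.card S : ℝ) * ‖D‖ ≤ (Multiset.card T : ℝ) * ‖D‖ :=
      mul_le_mul_of_nonneg_right hTcard hDn.le
    have h2 : (1 - ε) * (Multiset.card S : ℝ) * ‖D‖ ≤ Real.sqrt (lam * ε) * (Multiset.card S : ℝ) :=
      le_trans h1 hle
    have h3 : (‖D‖ * (1 - ε)) * (Multiset.card S : ℝ)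
        ≤ Real.sqrt (lam * ε) * (Multiset.card S : ℝ) := by linarith [h2]
    exact le_of_mul_le_mul_right h3 hn
  exact hfin
end
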